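/- arXiv:2506.11592 — 6 statements merged into one kernel-verified Lean document; each statement's English description precedes it below -/
import Mathlib

section
/- Let X and Y be locally compact Hausdorff topological spaces, let A be a closed subspace of Y, and let f : A → X be a proper continuous map. Then the adjunction space X ∪_f Y is a locally compact Hausdorff space. -/
open Set Topology

set_option linter.unusedSectionVars false

/-- A continuous map which is proper: preimages of compact sets are compact. -/
def ProperCont {X Y : Type*} [TopologicalSpace X] [TopologicalSpace Y] (f : X → Y) : Prop :=
  Continuous f ∧ ∀ K : Set Y, IsCompact K → IsCompact (f ⁻¹' K)

/-- The relation generating the adjunction-space identification: `a ∈ A ⊆ Y` is glued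
to `f a ∈ X`. -/
inductive AdjRel {X Y : Type*} {A : Set Y} (f : A → X) : X ⊕ Y → X ⊕ Y → Prop
  | glue (a : A) : AdjRel f (Sum.inl (f a)) (Sum.inr a.1)

/-- The adjunction space `X ∪_f Y`: the quotient of the disjoint union `X ⊔ Y`
identifying each `a ∈ A` with `f a ∈ X`. -/
def AdjSpace {X Y : Type*} {A : Set Y} (f : A → X) : Type _ := Quot (AdjRel f)

instance {X Y : Type*} [TopologicalSpace X] [TopologicalSpace Y] {A : Set Y} (f : A → X) :
    TopologicalSpace (AdjSpace f) :=
  inferInstanceAs (TopologicalSpace (Quot (AdjRel f)))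

section AdjAux
variable {X Y : Type*} {A : Set Y} (f : A → X)

/-- Explicit description of the equivalence relation generated by `AdjRel`. -/
def adjR : X ⊕ Y → X ⊕ Y → Prop
  | Sum.inl x, Sum.inl x' => x = x'
  | Sum.inl x, Sum.inr y => ∃ a : A, a.1 = y ∧ f a = x
  | Sum.inr y, Sum.inl x => ∃ a : A, a.1 = y ∧ f a = x
  | Sum.inr y, Sum.inr y' => y = y' ∨ ∃ a a' : A, a.1 = y ∧ a'.1 = y' ∧ f a = f a'

theorem adjR_refl (z : X ⊕ Y) : adjR f z z := by
  cases z with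
  | inl x => rfl
  | inr y => exact Or.inl rfl

theorem adjR_symm {z z' : X ⊕ Y} (h : adjR f z z') : adjR f z' z := by
  cases z <;> cases z' <;> simp only [adjR] at *
  · exact h.symm
  · exact h
  · exact h
  · rcases h with h | ⟨a, a', h1, h2, h3⟩
    · exact Or.inl h.symm
    · exact Or.inr ⟨a', a, h2, h1, h3.symm⟩

theorem adjR_trans {z₁ z₂ z₃ : X ⊕ Y} (h : adjR f z₁ z₂) (h' : adjR f z₂ z₃) :
    adjR f z₁ z₃ := by
  cases z₁ with
  | inl x₁ =>
    cases z₂ with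
    | inl x₂ =>
      cases h
      exact h'
    | inr y₂ =>
      obtain ⟨a, ha, hfa⟩ := h
      cases z₃ with
      | inl x₃ =>
        obtain ⟨a', ha', hfa'⟩ := h'
        have : a = a' := Subtype.ext (ha.trans ha'.symm)
        subst this
        exact hfa.symm.trans hfa'
      | inr y₃ =>
        rcases h' with rfl | ⟨b, b', hb, hb', hfb⟩
        · exact ⟨a, ha, hfa⟩
        · have : a = b := Subtype.ext (ha.trans hb.symm)
          subst this
          exact ⟨b', hb', hfb.symm.trans hfa⟩
  | inr y₁ =>
    cases z₂ with
    | inl x₂ =>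
      obtain ⟨a, ha, hfa⟩ := h
      cases z₃ with
      | inl x₃ =>
        cases h'
        exact ⟨a, ha, hfa⟩
      | inr y₃ =>
        obtain ⟨a', ha', hfa'⟩ := h'
        exact Or.inr ⟨a, a', ha, ha', hfa.trans hfa'.symm⟩
    | inr y₂ =>
      rcases h with rfl | ⟨a, a', ha, ha', hfa⟩
      · exact h'
      · cases z₃ with
        | inl x₃ =>
          obtain ⟨b, hb, hfb⟩ := h'
          have : a' = b := Subtype.ext (ha'.trans hb.symm)
          subst this
          exact ⟨a, ha, hfa.trans hfb⟩
        | inr y₃ =>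
          rcases h' with rfl | ⟨b, b', hb, hb', hfb⟩
          · exact Or.inr ⟨a, a', ha, ha', hfa⟩
          · have : a' = b := Subtype.ext (ha'.trans hb.symm)
            subst this
            exact Or.inr ⟨a, b', ha, hb', hfa.trans hfb⟩

theorem adjR_of_eqvGen {z z' : X ⊕ Y} (h : Relation.EqvGen (AdjRel f) z z') : adjR f z z' := by
  induction h with
  | rel a b hab => cases hab with | glue a => exact ⟨a, rfl, rfl⟩
  | refl a => exact adjR_refl f a
  | symm a b _ ih => exact adjR_symm f ih
  | trans a b c _ _ ih1 ih2 => exact adjR_trans f ih1 ih2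

theorem eqvGen_of_adjR {z z' : X ⊕ Y} (h : adjR f z z') : Relation.EqvGen (AdjRel f) z z' := by
  cases z with
  | inl x =>
    cases z' with
    | inl x' => cases h; exact Relation.EqvGen.refl _
    | inr y =>
      obtain ⟨a, rfl, rfl⟩ := h
      exact Relation.EqvGen.rel _ _ (AdjRel.glue a)
  | inr y =>
    cases z' with
    | inl x =>
      obtain ⟨a, rfl, rfl⟩ := h
      exact Relation.EqvGen.symm _ _ (Relation.EqvGen.rel _ _ (AdjRel.glue a))
    | inr y' =>
      rcases h with rfl | ⟨a, a', rfl, rfl, hfa⟩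
      · exact Relation.EqvGen.refl _
      · refine Relation.EqvGen.trans _ (Sum.inl (f a)) _
          (Relation.EqvGen.symm _ _ (Relation.EqvGen.rel _ _ (AdjRel.glue a))) ?_
        rw [hfa]
        exact Relation.EqvGen.rel _ _ (AdjRel.glue a')

theorem quot_mk_eq_iff (z z' : X ⊕ Y) :
    Quot.mk (AdjRel f) z = Quot.mk (AdjRel f) z' ↔ adjR f z z' :=
  ⟨fun h => adjR_of_eqvGen f (Quot.eqvGen_exact h),
   fun h => Quot.eqvGen_sound (eqvGen_of_adjR f h)⟩

/-- The "X-part" of the saturation of a set `C ⊆ X ⊕ Y`. -/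
def satX (C : Set (X ⊕ Y)) : Set X :=
  (Sum.inl ⁻¹' C) ∪ f '' (Subtype.val ⁻¹' (Sum.inr ⁻¹' C))

/-- The "Y-part" of the saturation of a set `C ⊆ X ⊕ Y`. -/
def satY (C : Set (X ⊕ Y)) : Set Y :=
  (Sum.inr ⁻¹' C) ∪ Subtype.val '' (f ⁻¹' satX f C)

theorem preimage_inl_sat (C : Set (X ⊕ Y)) :
    Sum.inl ⁻¹' (Quot.mk (AdjRel f) ⁻¹' (Quot.mk (AdjRel f) '' C)) = satX f C := by
  ext x
  simp only [mem_preimage, mem_image, satX, mem_union]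
  constructor
  · rintro ⟨c, hc, hqc⟩
    have hr : adjR f c (Sum.inl x) := (quot_mk_eq_iff f c (Sum.inl x)).1 hqc
    cases c with
    | inl x' => cases hr; exact Or.inl hc
    | inr y =>
      obtain ⟨a, ha, hfa⟩ := hr
      exact Or.inr ⟨a, by simpa [ha] using hc, hfa⟩
  · rintro (hx | ⟨a, ha, rfl⟩)
    · exact ⟨Sum.inl x, hx, rfl⟩
    · exact ⟨Sum.inr a.1, ha, ((quot_mk_eq_iff f _ _).2 ⟨a, rfl, rfl⟩)⟩

theorem preimage_inr_sat (C : Set (X ⊕ Y)) :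
    Sum.inr ⁻¹' (Quot.mk (AdjRel f) ⁻¹' (Quot.mk (AdjRel f) '' C)) = satY f C := by
  ext y
  simp only [mem_preimage, mem_image, satY, mem_union]
  constructor
  · rintro ⟨c, hc, hqc⟩
    have hr : adjR f c (Sum.inr y) := (quot_mk_eq_iff f c (Sum.inr y)).1 hqc
    cases c with
    | inl x =>
      obtain ⟨a, ha, hfa⟩ := hr
      exact Or.inr ⟨a, Or.inl (by rwa [hfa]), ha⟩
    | inr y' =>
      rcases hr with rfl | ⟨a, a', ha, ha', hfa⟩
      · exact Or.inl hc
      · refine Or.inr ⟨a', Or.inr ⟨a, by simpa [ha] using hc, hfa⟩, ha'⟩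
  · rintro (hy | ⟨a, ha, rfl⟩)
    · exact ⟨Sum.inr y, hy, rfl⟩
    · rcases ha with hx | ⟨a', ha', hfa'⟩
      · exact ⟨Sum.inl (f a), hx, ((quot_mk_eq_iff f _ _).2 ⟨a, rfl, rfl⟩)⟩
      · exact ⟨Sum.inr a'.1, ha', ((quot_mk_eq_iff f _ _).2
          (Or.inr ⟨a', a, rfl, rfl, hfa'⟩))⟩

theorem eq_image_sat (S : Set (X ⊕ Y)) :
    S = Sum.inl '' (Sum.inl ⁻¹' S) ∪ Sum.inr '' (Sum.inr ⁻¹' S) := by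
  ext z
  cases z <;> simp

end AdjAux

section Main
variable {X Y : Type*} [TopologicalSpace X] [TopologicalSpace Y]
  [LocallyCompactSpace X] [T2Space X] [LocallyCompactSpace Y] [T2Space Y]
  {A : Set Y} (hA : IsClosed A) (f : A → X) (hf : ProperCont f)

/-- A disjoint union of locally compact spaces is locally compact. -/
theorem sum_locallyCompactSpace : LocallyCompactSpace (X ⊕ Y) := by
  constructor
  rintro (x | y) n hn
  · rw [nhds_inl] at hn ⊢
    obtain ⟨s, hs, hsn, hsc⟩ :=
      LocallyCompactSpace.local_compact_nhds x (Sum.inl ⁻¹' n) (Filter.mem_map.1 hn)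
    refine ⟨Sum.inl '' s, Filter.image_mem_map hs, ?_, hsc.image continuous_inl⟩
    rintro z ⟨a, has, rfl⟩
    exact hsn has
  · rw [nhds_inr] at hn ⊢
    obtain ⟨s, hs, hsn, hsc⟩ :=
      LocallyCompactSpace.local_compact_nhds y (Sum.inr ⁻¹' n) (Filter.mem_map.1 hn)
    refine ⟨Sum.inr '' s, Filter.image_mem_map hs, ?_, hsc.image continuous_inr⟩
    rintro z ⟨a, has, rfl⟩
    exact hsn has

include hA hf in
theorem adjQuot_isClosedMap : IsClosedMap (Quot.mk (AdjRel f)) := by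
  have hfp : IsProperMap f := isProperMap_iff_isCompact_preimage.mpr ⟨hf.1, fun K hK => hf.2 K hK⟩
  intro C hC
  rw [← (isQuotientMap_quot_mk (r := AdjRel f)).isClosed_preimage]
  rw [isClosed_sum_iff, preimage_inl_sat, preimage_inr_sat]
  rw [isClosed_sum_iff] at hC
  have hSX : IsClosed (satX f C) := by
    refine hC.1.union (hfp.isClosedMap _ ?_)
    exact hC.2.preimage continuous_subtype_val
  refine ⟨hSX, hC.2.union ?_⟩
  exact (hA.isClosedEmbedding_subtypeVal.isClosedMap) _ (hSX.preimage hfp.continuous)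

include hA hf in
theorem adjQuot_fiber_compact (w : AdjSpace f) :
    IsCompact (Quot.mk (AdjRel f) ⁻¹' {w}) := by
  have key : ∀ x : X, IsCompact (Quot.mk (AdjRel f) ⁻¹' {Quot.mk (AdjRel f) (Sum.inl x)}) := by
    intro x
    have heq : Quot.mk (AdjRel f) ⁻¹' {Quot.mk (AdjRel f) (Sum.inl x)}
        = Sum.inl '' {x} ∪ Sum.inr '' (Subtype.val '' (f ⁻¹' {x})) := by
      ext z
      simp only [mem_preimage, mem_singleton_iff, quot_mk_eq_iff]
      cases z with
      | inl x' =>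
        simp only [adjR, mem_union, mem_image]
        constructor
        · rintro rfl; exact Or.inl ⟨x', rfl, rfl⟩
        · rintro (⟨x'', rfl, h⟩ | ⟨y, _, h⟩)
          · exact (Sum.inl_injective h).symm
          · exact absurd h (by simp)
      | inr y =>
        simp only [adjR, mem_union, mem_image]
        constructor
        · rintro ⟨a, rfl, hfa⟩
          exact Or.inr ⟨a.1, ⟨a, hfa, rfl⟩, rfl⟩
        · rintro (⟨x', _, h⟩ | ⟨y', ⟨a, hfa, rfl⟩, h⟩)
          · exact absurd h (by simp)
          · exact ⟨a, (Sum.inr_injective h), hfa⟩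
    rw [heq]
    exact (isCompact_singleton.image continuous_inl).union
      (((hf.2 {x} isCompact_singleton).image continuous_subtype_val).image continuous_inr)
  obtain ⟨z, rfl⟩ := Quot.exists_rep w
  cases z with
  | inl x => exact key x
  | inr y =>
    by_cases hy : y ∈ A
    · have : Quot.mk (AdjRel f) (Sum.inr y) = Quot.mk (AdjRel f) (Sum.inl (f ⟨y, hy⟩)) :=
        (Quot.sound (AdjRel.glue ⟨y, hy⟩)).symm
      rw [this]
      exact key _
    · have heq : Quot.mk (AdjRel f) ⁻¹' {Quot.mk (AdjRel f) (Sum.inr y)}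
          = {Sum.inr y} := by
        ext z
        simp only [mem_preimage, mem_singleton_iff, quot_mk_eq_iff]
        cases z with
        | inl x =>
          simp only [adjR]
          constructor
          · rintro ⟨a, rfl, _⟩; exact absurd a.2 hy
          · intro h; exact absurd h (by simp)
        | inr y' =>
          simp only [adjR]
          constructor
          · rintro (rfl | ⟨a, a', ha, rfl, _⟩)
            · rfl
            · exact absurd a'.2 hy
          · rintro h; exact Or.inl (Sum.inr_injective h)
      have hc : IsCompact (Quot.mk (AdjRel f) ⁻¹' {Quot.mk (AdjRel f) (Sum.inr y)}) := by
        rw [heq]; exact isCompact_singleton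
      exact hc
end Main

/-- Let `X` and `Y` be locally compact Hausdorff topological spaces, let `A` be a closed
subspace of `Y`, and let `f : A → X` be a proper continuous map. Then the adjunction space
`X ∪_f Y` is a locally compact Hausdorff space. -/
theorem adjSpace_locallyCompact_t2 {X Y : Type*} [TopologicalSpace X] [TopologicalSpace Y]
    [LocallyCompactSpace X] [T2Space X] [LocallyCompactSpace Y] [T2Space Y]
    {A : Set Y} (hA : IsClosed A) (f : A → X) (hf : ProperCont f) :
    LocallyCompactSpace (AdjSpace f) ∧ T2Space (AdjSpace f) := by
  set q : X ⊕ Y → AdjSpace f := Quot.mk (AdjRel f) with hq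
  have hqcont : Continuous q := continuous_quot_mk
  have hqsurj : Function.Surjective q := Quot.exists_rep
  have hqclosed : IsClosedMap q := adjQuot_isClosedMap hA f hf
  have hfib : ∀ w : AdjSpace f, IsCompact (q ⁻¹' {w}) := adjQuot_fiber_compact hA f hf
  haveI : LocallyCompactSpace (X ⊕ Y) := sum_locallyCompactSpace
  constructor
  · constructor
    intro w n hn
    obtain ⟨O, hOn, hOopen, hwO⟩ := mem_nhds_iff.1 hn
    obtain ⟨K, hKc, hFK, hKO⟩ := exists_compact_between (hfib w)
      (hOopen.preimage hqcont) (by intro z hz; exact mem_preimage.2 (hz ▸ hwO))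
    have hVopen : IsOpen (q '' (interior K)ᶜ)ᶜ :=
      (hqclosed _ (isClosed_compl_iff.2 isOpen_interior)).isOpen_compl
    have hwV : w ∈ (q '' (interior K)ᶜ)ᶜ := by
      rintro ⟨z, hz, rfl⟩
      exact hz (hFK (mem_preimage.2 rfl))
    refine ⟨q '' K, ?_, fun z hz => ?_, hKc.image hqcont⟩
    · refine Filter.mem_of_superset (hVopen.mem_nhds hwV) ?_
      intro w' hw'
      obtain ⟨z, rfl⟩ := hqsurj w'
      by_contra hzK
      exact hw' ⟨z, fun hint => hzK ⟨z, interior_subset hint, rfl⟩, rfl⟩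
    · obtain ⟨z', hz', rfl⟩ := hz
      exact hOn (hKO hz')
  · constructor
    intro w₁ w₂ hne
    have hdisj : Disjoint (q ⁻¹' {w₁}) (q ⁻¹' {w₂}) := by
      rw [Set.disjoint_left]
      rintro z h1 h2
      exact hne (h1.symm.trans h2)
    obtain ⟨U₁, U₂, hU₁, hU₂, hF₁, hF₂, hUU⟩ :=
      SeparatedNhds.of_isCompact_isCompact (hfib w₁) (hfib w₂) hdisj
    refine ⟨(q '' U₁ᶜ)ᶜ, (q '' U₂ᶜ)ᶜ,
      (hqclosed _ hU₁.isClosed_compl).isOpen_compl,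
      (hqclosed _ hU₂.isClosed_compl).isOpen_compl, ?_, ?_, ?_⟩
    · rintro ⟨z, hz, rfl⟩
      exact hz (hF₁ (mem_preimage.2 rfl))
    · rintro ⟨z, hz, rfl⟩
      exact hz (hF₂ (mem_preimage.2 rfl))
    · rw [Set.disjoint_left]
      intro w hw1 hw2
      obtain ⟨z, rfl⟩ := hqsurj w
      have hz1 : z ∈ U₁ := by_contra fun h => hw1 ⟨z, h, rfl⟩
      have hz2 : z ∈ U₂ := by_contra fun h => hw2 ⟨z, h, rfl⟩
      exact hUU.le_bot ⟨hz1, hz2⟩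
end

section
/- Let X = {0} ∪ {1/n : n ∈ ℕ, n ≥ 1} with the subspace topology from ℝ, let Y = X × ℕ where ℕ carries the discrete topology, let A = {0} × ℕ ⊆ Y, and let f : A → X be given by f(0,n) = 1/n. Then A is closed in Y, X is compact Hausdorff, Y is second-countable locally compact Hausdorff, and the adjunction space X ∪_f Y is not locally compact. -/
open Set Topology

/-- `X = {0} ∪ {1/n : n ∈ ℕ, n ≥ 1}` as a subset of `ℝ`. -/
def XSet : Set ℝ := {0} ∪ {x | ∃ n : ℕ, 1 ≤ n ∧ x = 1 / (n : ℝ)}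

lemma one_div_nat_mem_XSet (n : ℕ) : (1 / (n : ℝ)) ∈ XSet := by
  rcases Nat.eq_zero_or_pos n with h | h
  · left; simp [h]
  · right; exact ⟨n, h, rfl⟩

/-- `A = {0} × ℕ` as a subset of `Y = X × ℕ`. -/
def ASet : Set (↥XSet × ℕ) := {p | (p.1 : ℝ) = 0}

/-- The attaching map `f : A → X`, `f (0, n) = 1/n`. -/
noncomputable def fAttach : ASet → ↥XSet := fun a => ⟨1 / ((a.1.2 : ℕ) : ℝ), one_div_nat_mem_XSet a.1.2⟩

-- auxiliary lemmas

lemma adjRel_eqvGen_free {X Y : Type*} {A : Set Y} (f : A → X) {y : Y} (hy : y ∉ A)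
    {z w : X ⊕ Y} (h : Relation.EqvGen (AdjRel f) z w) :
    z = Sum.inr y ↔ w = Sum.inr y := by
  induction h with
  | rel z w hr =>
      cases hr with
      | glue a =>
        constructor
        · intro h; exact absurd h (by simp)
        · intro h
          exact absurd (Sum.inr.inj h ▸ a.2) hy
  | refl => exact Iff.rfl
  | symm _ _ _ ih => exact ih.symm
  | trans _ _ _ _ _ ih1 ih2 => exact ih1.trans ih2

lemma adj_free_class {X Y : Type*} {A : Set Y} (f : A → X) {y : Y} (hy : y ∉ A)
    {z : X ⊕ Y} (h : Quot.mk (AdjRel f) z = Quot.mk (AdjRel f) (Sum.inr y)) :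
    z = Sum.inr y :=
  (adjRel_eqvGen_free f hy (Quot.eqvGen_exact h)).mpr rfl

lemma XSet_eq_insert_range : XSet = insert 0 (Set.range fun n : ℕ => 1 / ((n : ℝ) + 1)) := by
  ext x
  constructor
  · rintro (h | ⟨n, hn, rfl⟩)
    · exact Or.inl h
    · right
      obtain ⟨m, rfl⟩ := Nat.exists_eq_add_of_le hn
      refine ⟨m, ?_⟩
      show 1 / ((m : ℝ) + 1) = 1 / ((1 + m : ℕ) : ℝ)
      push_cast; ring_nf
  · rintro (h | ⟨n, rfl⟩)
    · exact Or.inl h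
    · right
      exact ⟨n + 1, Nat.succ_le_succ (Nat.zero_le n), by push_cast; ring⟩

lemma isCompact_XSet : IsCompact XSet := by
  rw [XSet_eq_insert_range]
  exact tendsto_one_div_add_atTop_nhds_zero_nat.isCompact_insert_range

/-- With `X = {0} ∪ {1/n : n ≥ 1} ⊆ ℝ`, `Y = X × ℕ` (`ℕ` discrete), `A = {0} × ℕ` and
`f(0, n) = 1/n`, the set `A` is closed in `Y`, `X` is compact Hausdorff, `Y` is
second-countable locally compact Hausdorff, and the adjunction space `X ∪_f Y` is not
locally compact (some point has no compact neighborhood). -/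
theorem adjSpace_not_locallyCompact_example :
    DiscreteTopology ℕ ∧
    IsClosed ASet ∧
    CompactSpace ↥XSet ∧ T2Space ↥XSet ∧
    SecondCountableTopology (↥XSet × ℕ) ∧ LocallyCompactSpace (↥XSet × ℕ) ∧
      T2Space (↥XSet × ℕ) ∧
    ¬ WeaklyLocallyCompactSpace (AdjSpace fAttach) := by
  haveI hX : CompactSpace ↥XSet := isCompact_iff_compactSpace.mp isCompact_XSet
  refine ⟨inferInstance, ?_, hX, inferInstance, inferInstance, inferInstance, inferInstance, ?_⟩
  · exact isClosed_eq (continuous_subtype_val.comp continuous_fst) continuous_const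

  · intro hW
    set q : (↥XSet ⊕ (↥XSet × ℕ)) → AdjSpace fAttach := Quot.mk (AdjRel fAttach) with hq
    have hqm : IsQuotientMap q := isQuotientMap_quot_mk
    set x0 : ↥XSet := ⟨0, Or.inl rfl⟩ with hx0
    set seq : ℕ → ↥XSet := fun n => ⟨1 / (n : ℝ), one_div_nat_mem_XSet n⟩ with hseqdef
    have hseq : Filter.Tendsto seq Filter.atTop (𝓝 x0) := by
      rw [tendsto_subtype_rng]
      exact tendsto_one_div_atTop_nhds_zero_nat
    have hglue : ∀ n : ℕ, q (Sum.inl (seq n)) = q (Sum.inr (x0, n)) := by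
      intro n
      exact Quot.sound (AdjRel.glue (f := fAttach) ⟨(x0, n), rfl⟩)
    obtain ⟨K, hK, hKmem⟩ := hW.exists_compact_mem_nhds (q (Sum.inl x0))
    obtain ⟨U, hUK, hUopen, hp0U⟩ := mem_nhds_iff.mp hKmem
    set O : Set (↥XSet ⊕ (↥XSet × ℕ)) := q ⁻¹' U with hO
    have hOopen : IsOpen O := hUopen.preimage hqm.continuous
    -- the set of good indices
    set T : Set ℕ := {n : ℕ | Sum.inr ((x0, n) : ↥XSet × ℕ) ∈ O} with hT
    have hTinf : T.Infinite := by
      have hWo : IsOpen {x : ↥XSet | Sum.inl x ∈ O} :=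
        hOopen.preimage continuous_inl
      have hx0W : x0 ∈ {x : ↥XSet | Sum.inl x ∈ O} := hp0U
      have hev : ∀ᶠ n in Filter.atTop, seq n ∈ {x : ↥XSet | Sum.inl x ∈ O} :=
        hseq.eventually_mem (hWo.mem_nhds hx0W)
      obtain ⟨N, hN⟩ := Filter.eventually_atTop.mp hev
      refine Set.Infinite.mono ?_ (Set.Ici_infinite N)
      intro n hn
      have h1 : Sum.inl (seq n) ∈ O := hN n hn
      show Sum.inr ((x0, n) : ↥XSet × ℕ) ∈ O
      rw [hO, Set.mem_preimage] at h1 ⊢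
      rw [← hglue n]
      exact h1
    -- choose a nonzero point of each glued slice inside O
    have key : ∀ n ∈ T, ∃ x : ↥XSet, (x : ℝ) ≠ 0 ∧ Sum.inr ((x, n) : ↥XSet × ℕ) ∈ O := by
      intro n hn
      have hWn : IsOpen {x : ↥XSet | Sum.inr ((x, n) : ↥XSet × ℕ) ∈ O} :=
        hOopen.preimage (continuous_inr.comp (continuous_id.prodMk continuous_const))
      have hx0Wn : x0 ∈ {x : ↥XSet | Sum.inr ((x, n) : ↥XSet × ℕ) ∈ O} := hn
      have hev : ∀ᶠ m in Filter.atTop, seq m ∈ {x : ↥XSet | Sum.inr ((x, n) : ↥XSet × ℕ) ∈ O} :=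
        hseq.eventually_mem (hWn.mem_nhds hx0Wn)
      obtain ⟨m, hm1, hm2⟩ := ((Filter.eventually_ge_atTop 1).and hev).exists
      refine ⟨seq m, ?_, hm2⟩
      show (1 : ℝ) / (m : ℝ) ≠ 0
      have : (m : ℝ) ≠ 0 := Nat.cast_ne_zero.mpr (by omega)
      positivity
    have key' : ∀ n : ℕ, ∃ x : ↥XSet, n ∈ T → ((x : ℝ) ≠ 0 ∧ Sum.inr ((x, n) : ↥XSet × ℕ) ∈ O) := by
      intro n
      by_cases hn : n ∈ T
      · obtain ⟨x, h1, h2⟩ := key n hn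
        exact ⟨x, fun _ => ⟨h1, h2⟩⟩
      · exact ⟨x0, fun h => absurd h hn⟩
    choose xf hxf using key'
    have hxf1 : ∀ n ∈ T, (xf n : ℝ) ≠ 0 := fun n hn => (hxf n hn).1
    have hxf2 : ∀ n ∈ T, Sum.inr ((xf n, n) : ↥XSet × ℕ) ∈ O := fun n hn => (hxf n hn).2
    -- the closed discrete infinite set
    set SY : Set (↥XSet × ℕ) := {p | p.2 ∈ T ∧ p.1 = xf p.2} with hSY
    set SZ : Set (AdjSpace fAttach) := q '' (Sum.inr '' SY) with hSZ
    have hSYA : ∀ p ∈ SY, p ∉ ASet := by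
      rintro p ⟨hpT, hpx⟩ hpA
      exact hxf1 p.2 hpT (by rw [← hpx]; exact hpA)
    have hsat : ∀ V : Set (↥XSet × ℕ), (∀ p ∈ V, p ∉ ASet) →
        q ⁻¹' (q '' (Sum.inr '' V)) = Sum.inr '' V := by
      intro V hV
      ext z
      constructor
      · rintro ⟨_, ⟨p, hp, rfl⟩, hqe⟩
        have : z = Sum.inr p := adj_free_class fAttach (hV p hp) hqe.symm
        exact ⟨p, hp, this.symm⟩
      · intro hz
        exact Set.mem_image_of_mem q hz
    have hSYclosed : IsClosed SY := by
      rw [← isOpen_compl_iff, isOpen_iff_forall_mem_open]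
      intro p hp
      by_cases h2 : p.2 ∈ T
      · refine ⟨{xf p.2}ᶜ ×ˢ {p.2}, ?_, isOpen_compl_singleton.prod (isOpen_discrete _), ?_, rfl⟩
        · rintro ⟨a, b⟩ ⟨ha, hb⟩
          rintro ⟨-, ha'⟩
          rcases hb with rfl
          exact ha ha'
        · intro h
          exact hp ⟨h2, h⟩
      · refine ⟨Set.univ ×ˢ {p.2}, ?_, isOpen_univ.prod (isOpen_discrete _), trivial, rfl⟩
        rintro ⟨a, b⟩ ⟨-, hb⟩
        rintro ⟨hbT, -⟩
        rcases hb with rfl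
        exact h2 hbT
    have hSZclosed : IsClosed SZ := by
      rw [← hqm.isClosed_preimage, hSZ, hsat SY hSYA, isClosed_sum_iff]
      constructor
      · convert isClosed_empty
        ext x
        simp
      · rwa [Set.preimage_image_eq _ Sum.inr_injective]
    have hSZK : SZ ⊆ K := by
      rintro _ ⟨_, ⟨p, ⟨hpT, hpx⟩, rfl⟩, rfl⟩
      apply hUK
      have : p = (xf p.2, p.2) := Prod.ext hpx rfl
      rw [this]
      exact hxf2 p.2 hpT
    have hSZcomp : IsCompact SZ := hK.of_isClosed_subset hSZclosed hSZK
    set φ : ℕ → AdjSpace fAttach := fun n => q (Sum.inr (xf n, n)) with hφ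
    have hφmem : ∀ n ∈ T, φ n ∈ SZ := by
      intro n hn
      exact Set.mem_image_of_mem q (Set.mem_image_of_mem _ ⟨hn, rfl⟩)
    have hSZinf : SZ.Infinite := by
      refine Set.Infinite.mono ?_ (hTinf.image (f := φ) ?_)
      · rintro _ ⟨n, hn, rfl⟩; exact hφmem n hn
      · intro n hn m hm he
        have hy : ((xf m, m) : ↥XSet × ℕ) ∉ ASet := fun h => hxf1 m hm h
        have := adj_free_class fAttach hy he
        exact congrArg Prod.snd (Sum.inr_injective (by exact this))
    -- open sets isolating each slice
    set Uo : ℕ → Set (AdjSpace fAttach) :=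
      fun n => q '' (Sum.inr '' ({x : ↥XSet | (x : ℝ) ≠ 0} ×ˢ ({n} : Set ℕ))) with hUo
    have hUoA : ∀ n : ℕ, ∀ p ∈ ({x : ↥XSet | (x : ℝ) ≠ 0} ×ˢ ({n} : Set ℕ)), p ∉ ASet :=
      fun n p hp hA => hp.1 hA
    have hUoopen : ∀ n : ℕ, IsOpen (Uo n) := by
      intro n
      rw [← hqm.isOpen_preimage, hUo, hsat _ (hUoA n)]
      apply isOpenMap_inr
      exact (IsOpen.preimage continuous_subtype_val isOpen_compl_singleton).prod
        (isOpen_discrete _)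
    have hcov : SZ ⊆ ⋃ n ∈ T, Uo n := by
      rintro _ ⟨_, ⟨p, ⟨hpT, hpx⟩, rfl⟩, rfl⟩
      refine Set.mem_biUnion hpT ?_
      refine Set.mem_image_of_mem q (Set.mem_image_of_mem _ ⟨?_, rfl⟩)
      show (p.1 : ℝ) ≠ 0
      rw [hpx]; exact hxf1 p.2 hpT
    obtain ⟨F, hFT, hFfin, hFcov⟩ :=
      hSZcomp.elim_finite_subcover_image (fun n _ => hUoopen n) hcov
    have hsub : SZ ⊆ φ '' F := by
      rintro s hs
      have hs' := hFcov hs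
      rw [Set.mem_iUnion₂] at hs'
      obtain ⟨n, hnF, hsn⟩ := hs'
      obtain ⟨_, ⟨p, ⟨hpT, hpx⟩, rfl⟩, rfl⟩ := hs
      obtain ⟨_, ⟨r, ⟨hr1, hr2⟩, rfl⟩, hqe⟩ := hsn
      have hy : ((xf p.2, p.2) : ↥XSet × ℕ) ∉ ASet := fun h => hxf1 p.2 hpT h
      have hp' : p = (xf p.2, p.2) := Prod.ext hpx rfl
      have : Sum.inr r = (Sum.inr (xf p.2, p.2) : ↥XSet ⊕ (↥XSet × ℕ)) := by
        apply adj_free_class fAttach hy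
        rw [← hp']; exact hqe
      have hr : r = (xf p.2, p.2) := Sum.inr_injective this
      rcases hr2 with rfl
      have hn2 : r.2 = p.2 := by rw [hr]
      refine ⟨p.2, hn2 ▸ hnF, ?_⟩
      show q (Sum.inr (xf p.2, p.2)) = q (Sum.inr p)
      rw [← hp']
    exact hSZinf ((hFfin.image φ).subset hsub)
end

section
/- Let G be a closed subgraph of a topological graph F. Then the following are equivalent: (1) G is a regular closed subgraph of F, i.e., G⁰ is negatively invariant in F⁰ and r_F⁻¹(G⁰) ⊆ G¹; (2) the pair of inclusion maps (G¹ ↪ F¹, G⁰ ↪ F⁰) is a regular factor map from G to F. -/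
open Set Topology

/-- The raw data of a (topological) graph: a source and a range map from edges to vertices. -/
structure GraphData (V E : Type*) where
  s : E → V
  r : E → V

/-- `g` is a topological graph: source and range are continuous and the range map is a
local homeomorphism. -/
structure IsTopGraph {V E : Type*} [TopologicalSpace V] [TopologicalSpace E]
    (g : GraphData V E) : Prop where
  s_cont : Continuous g.s
  r_cont : Continuous g.r
  r_locHomeo : IsLocalHomeomorph g.r

namespace GraphData

variable {V E : Type*} [TopologicalSpace V] [TopologicalSpace E]

/-- `E⁰_fin`: vertices having a neighborhood whose preimage under the source map is compact. -/
def finSet (g : GraphData V E) : Set V := {v | ∃ U ∈ nhds v, IsCompact (g.s ⁻¹' U)}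

/-- `E⁰_sink = E⁰ \ closure (s(E¹))`. -/
def sinkSet (g : GraphData V E) : Set V := (closure (Set.range g.s))ᶜ

/-- `E⁰_reg = E⁰_fin \ closure (E⁰_sink)`. -/
def regSet (g : GraphData V E) : Set V := g.finSet \ closure g.sinkSet

/-- `E⁰_sing = E⁰ \ E⁰_reg`. -/
def singSet (g : GraphData V E) : Set V := (g.regSet)ᶜ

/-- A set of vertices is negatively invariant if every regular vertex in it emits an
edge whose range lies in it. -/
def NegInvariant (g : GraphData V E) (Y : Set V) : Prop :=
  ∀ v ∈ Y ∩ g.regSet, ∃ e, g.s e = v ∧ g.r e ∈ Y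

/-- A topological graph is row-finite if `s(E¹) = E⁰_reg`. -/
def RowFinite (g : GraphData V E) : Prop := Set.range g.s = g.regSet

/-- The restriction of a graph to a pair of subsets of vertices and edges. -/
def restrict (g : GraphData V E) (G0 : Set V) (G1 : Set E)
    (hs : Set.MapsTo g.s G1 G0) (hr : Set.MapsTo g.r G1 G0) : GraphData G0 G1 where
  s := fun e => ⟨g.s e, hs e.2⟩
  r := fun e => ⟨g.r e, hr e.2⟩

end GraphData

/-- `(G0, G1)` determines a closed subgraph of `g` (in particular it is itself
a topological graph with the restricted source and range maps). -/
structure IsClosedSubgraph {V E : Type*} [TopologicalSpace V] [TopologicalSpace E]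
    (g : GraphData V E) (G0 : Set V) (G1 : Set E) : Prop where
  s_maps : Set.MapsTo g.s G1 G0
  r_maps : Set.MapsTo g.r G1 G0
  closed0 : IsClosed G0
  closed1 : IsClosed G1
  isGraph : IsTopGraph (g.restrict G0 G1 s_maps r_maps)

/-- A regular closed subgraph: a closed subgraph whose vertex set is negatively invariant
and such that `r⁻¹(G⁰) ⊆ G¹`. -/
structure IsRegularClosedSubgraph {V E : Type*} [TopologicalSpace V] [TopologicalSpace E]
    (g : GraphData V E) (G0 : Set V) (G1 : Set E) extends IsClosedSubgraph g G0 G1 : Prop where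
  negInv : g.NegInvariant G0
  r_pre : g.r ⁻¹' G0 ⊆ G1

/-- A regular factor map `(m¹, m⁰) : gG → gF` between topological graphs: a pair of proper
continuous maps satisfying (F1), (F2) and (F3). -/
structure IsRegularFactorMap {V1 E1 V2 E2 : Type*}
    [TopologicalSpace V1] [TopologicalSpace E1] [TopologicalSpace V2] [TopologicalSpace E2]
    (gG : GraphData V1 E1) (gF : GraphData V2 E2) (m0 : V1 → V2) (m1 : E1 → E2) : Prop where
  proper0 : ProperCont m0
  proper1 : ProperCont m1
  F1r : ∀ e, gF.r (m1 e) = m0 (gG.r e)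
  F1s : ∀ e, gF.s (m1 e) = m0 (gG.s e)
  F2 : ∀ (x : E2) (v : V1), gF.r x = m0 v → ∃! e : E1, m1 e = x ∧ gG.r e = v
  F3 : m0 '' gG.singSet ⊆ gF.singSet

theorem aux_compact_preimage_val {X : Type*} [TopologicalSpace X] {C K : Set X}
    (hC : IsClosed C) (hK : IsCompact K) :
    IsCompact ((Subtype.val : C → X) ⁻¹' K) := by
  rw [Topology.IsEmbedding.subtypeVal.isCompact_iff, Subtype.image_preimage_coe]
  exact hK.inter_left hC

theorem aux_finSet_isOpen {V E : Type*} [TopologicalSpace V] [TopologicalSpace E]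
    (g : GraphData V E) : IsOpen g.finSet := by
  rw [isOpen_iff_mem_nhds]
  rintro v ⟨U, hU, hK⟩
  have hsub : interior U ⊆ g.finSet := fun w hw =>
    ⟨U, Filter.mem_of_superset (isOpen_interior.mem_nhds hw) interior_subset, hK⟩
  exact Filter.mem_of_superset (isOpen_interior.mem_nhds (mem_interior_iff_mem_nhds.2 hU)) hsub

/-- A regular vertex is in the image of the source map. -/
theorem aux_mem_range_s {V E : Type*} [TopologicalSpace V] [TopologicalSpace E] [T2Space V]
    (g : GraphData V E) (hs : Continuous g.s) {v : V}
    (hfin : v ∈ g.finSet) (hcl : v ∈ closure (Set.range g.s)) : v ∈ Set.range g.s := by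
  obtain ⟨U, hU, hK⟩ := hfin
  have hclosed : IsClosed (g.s '' (g.s ⁻¹' U)) := (hK.image hs).isClosed
  have hsub : Set.range g.s ∩ interior U ⊆ g.s '' (g.s ⁻¹' U) := by
    rintro x ⟨⟨e, rfl⟩, hx⟩
    exact ⟨e, Set.mem_preimage.2 (interior_subset hx), rfl⟩
  have hv : v ∈ closure (Set.range g.s ∩ interior U) := by
    rw [mem_closure_iff] at hcl ⊢
    intro O hO hvO
    obtain ⟨x, hx1, hx2⟩ := hcl (O ∩ interior U) (hO.inter isOpen_interior)
      ⟨hvO, mem_interior_iff_mem_nhds.2 hU⟩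
    exact ⟨x, hx1.1, hx2, hx1.2⟩
  obtain ⟨e, _, he⟩ := hclosed.closure_eq ▸ closure_mono hsub hv
  exact ⟨e, he⟩

/-- Key step: if `G0` is negatively invariant and `r⁻¹(G0) ⊆ G1`, then a vertex of `G0`
regular in `F` is regular in the subgraph. -/
theorem aux_reg_subtype {V E : Type*} [TopologicalSpace V] [TopologicalSpace E]
    (gF : GraphData V E) {G0 : Set V} {G1 : Set E} (hG : IsClosedSubgraph gF G0 G1)
    (hneg : gF.NegInvariant G0) (hpre : gF.r ⁻¹' G0 ⊆ G1)
    {v : V} (hv : v ∈ G0) (hreg : v ∈ gF.regSet) :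
    (⟨v, hv⟩ : G0) ∈ (gF.restrict G0 G1 hG.s_maps hG.r_maps).regSet := by
  set gG := gF.restrict G0 G1 hG.s_maps hG.r_maps with hgG
  constructor
  · -- finSet
    obtain ⟨U, hU, hK⟩ := hreg.1
    refine ⟨Subtype.val ⁻¹' U,
      continuous_subtype_val.continuousAt.preimage_mem_nhds hU, ?_⟩
    have heq : gG.s ⁻¹' (Subtype.val ⁻¹' U) = (Subtype.val : G1 → E) ⁻¹' (gF.s ⁻¹' U) := rfl
    rw [heq]
    exact aux_compact_preimage_val hG.closed1 hK
  · -- not in closure of sink set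
    have hRopen : IsOpen gF.regSet := (aux_finSet_isOpen gF).sdiff isClosed_closure
    have hOopen : IsOpen ((Subtype.val : G0 → V) ⁻¹' gF.regSet) :=
      hRopen.preimage continuous_subtype_val
    have hsubrange : (Subtype.val : G0 → V) ⁻¹' gF.regSet ⊆ Set.range gG.s := by
      rintro ⟨w, hw0⟩ hw
      obtain ⟨e, hse, hre⟩ := hneg w ⟨hw0, hw⟩
      exact ⟨⟨e, hpre hre⟩, Subtype.ext hse⟩
    have hsink : gG.sinkSet ⊆ ((Subtype.val : G0 → V) ⁻¹' gF.regSet)ᶜ := by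
      intro x hx hxR
      exact hx (subset_closure (hsubrange hxR))
    have hclosure : closure gG.sinkSet ⊆ ((Subtype.val : G0 → V) ⁻¹' gF.regSet)ᶜ :=
      closure_minimal hsink (isClosed_compl_iff.2 hOopen)
    intro hmem
    exact hclosure hmem hreg

/-- Let `G` be a closed subgraph of a topological graph `F`. Then `G` is a regular closed
subgraph (i.e. `G⁰` is negatively invariant in `F⁰` and `r_F⁻¹(G⁰) ⊆ G¹`) if and only if the
pair of inclusion maps gives a regular factor map `G → F`. -/
theorem isRegularClosedSubgraph_iff_inclusion_isRegularFactorMap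
    {V E : Type*} [TopologicalSpace V] [TopologicalSpace E]
    [LocallyCompactSpace V] [T2Space V] [LocallyCompactSpace E] [T2Space E]
    (gF : GraphData V E) (hF : IsTopGraph gF) {G0 : Set V} {G1 : Set E}
    (hG : IsClosedSubgraph gF G0 G1) :
    IsRegularClosedSubgraph gF G0 G1 ↔
      IsRegularFactorMap (gF.restrict G0 G1 hG.s_maps hG.r_maps) gF
        (Subtype.val : G0 → V) (Subtype.val : G1 → E) := by
  constructor
  · intro h
    refine ⟨⟨continuous_subtype_val, fun K hK => aux_compact_preimage_val hG.closed0 hK⟩,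
      ⟨continuous_subtype_val, fun K hK => aux_compact_preimage_val hG.closed1 hK⟩,
      fun e => rfl, fun e => rfl, ?_, ?_⟩
    · -- F2
      intro x v hxv
      have hx1 : x ∈ G1 := h.r_pre (by rw [mem_preimage, hxv]; exact v.2)
      exact ⟨⟨x, hx1⟩, ⟨rfl, Subtype.ext hxv⟩, fun y hy => Subtype.ext hy.1⟩
    · -- F3
      rintro w ⟨⟨u, hu⟩, hsing, rfl⟩
      intro hregF
      exact hsing (aux_reg_subtype gF hG h.negInv h.r_pre hu hregF)
  · intro h
    have hpre : gF.r ⁻¹' G0 ⊆ G1 := by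
      intro e he
      obtain ⟨⟨e', he'⟩, ⟨h1, _⟩, _⟩ := h.F2 e ⟨gF.r e, he⟩ rfl
      exact h1 ▸ he'
    refine ⟨⟨hG.s_maps, hG.r_maps, hG.closed0, hG.closed1, hG.isGraph⟩, ?_, hpre⟩
    rintro v ⟨hv0, hvreg⟩
    set gG := gF.restrict G0 G1 hG.s_maps hG.r_maps
    have hregG : (⟨v, hv0⟩ : G0) ∈ gG.regSet := by
      by_contra hc
      exact h.F3 ⟨⟨v, hv0⟩, hc, rfl⟩ hvreg
    have hcl : (⟨v, hv0⟩ : G0) ∈ closure (Set.range gG.s) := by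
      have hns : (⟨v, hv0⟩ : G0) ∉ gG.sinkSet := fun hs => hregG.2 (subset_closure hs)
      exact not_not.1 hns
    obtain ⟨⟨e, he1⟩, hse⟩ := aux_mem_range_s gG hG.isGraph.s_cont hregG.1 hcl
    exact ⟨e, congrArg Subtype.val hse, hG.r_maps he1⟩
end

section
/- Let m : G → E be a regular factor map between topological graphs. Then m(G) := (m¹(G¹), m⁰(G⁰), s_E|_{m¹(G¹)}, r_E|_{m¹(G¹)}) is a regular closed subgraph of E; in particular m⁰(G⁰) and m¹(G¹) are closed, r_E and s_E map m¹(G¹) into m⁰(G⁰), r_E⁻¹(m⁰(G⁰)) ⊆ m¹(G¹), and m⁰(G⁰) is negatively invariant in E⁰. -/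
open Set Topology

/-- In a Hausdorff space, every regular vertex is the source of some edge. -/
lemma regSet_subset_range_s {V E : Type*} [TopologicalSpace V] [TopologicalSpace E]
    [T2Space V] (g : GraphData V E) (hs : Continuous g.s) {v : V} (hv : v ∈ g.regSet) :
    v ∈ Set.range g.s := by
  obtain ⟨⟨U, hU, hUc⟩, hns⟩ := hv
  have hvcl : v ∈ closure (Set.range g.s) := by
    by_contra h
    exact hns (subset_closure h)
  set K : Set V := g.s '' (g.s ⁻¹' U) with hK
  have hKcomp : IsCompact K := hUc.image hs
  have hKcl : IsClosed K := hKcomp.isClosed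
  have hvK : v ∈ closure K := by
    rw [mem_closure_iff_nhds]
    intro t ht
    have h2 : t ∩ interior U ∈ nhds v := Filter.inter_mem ht (interior_mem_nhds.2 hU)
    obtain ⟨x, hxt, hxr⟩ := mem_closure_iff_nhds.1 hvcl _ h2
    obtain ⟨e, he⟩ := hxr
    exact ⟨x, hxt.1, ⟨e, by simp [he ▸ interior_subset hxt.2], he⟩⟩
  rw [hKcl.closure_eq] at hvK
  obtain ⟨e, _, he⟩ := hvK
  exact ⟨e, he⟩

/-- Let `m : G → E` be a regular factor map between topological graphs. Then the image
`m(G) = (m¹(G¹), m⁰(G⁰))` with the restricted source and range maps is a regular closed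
subgraph of `E`; in particular `m⁰(G⁰)` and `m¹(G¹)` are closed, `r_E` and `s_E` map
`m¹(G¹)` into `m⁰(G⁰)`, `r_E⁻¹(m⁰(G⁰)) ⊆ m¹(G¹)`, and `m⁰(G⁰)` is negatively invariant. -/
theorem image_isRegularClosedSubgraph
    {VG EG VE EE : Type*} [TopologicalSpace VG] [TopologicalSpace EG]
    [TopologicalSpace VE] [TopologicalSpace EE]
    [LocallyCompactSpace VG] [T2Space VG] [LocallyCompactSpace EG] [T2Space EG]
    [LocallyCompactSpace VE] [T2Space VE] [LocallyCompactSpace EE] [T2Space EE]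
    (gG : GraphData VG EG) (gE : GraphData VE EE)
    (hG : IsTopGraph gG) (hE : IsTopGraph gE)
    (m0 : VG → VE) (m1 : EG → EE) (hm : IsRegularFactorMap gG gE m0 m1) :
    IsRegularClosedSubgraph gE (Set.range m0) (Set.range m1) := by
  obtain ⟨⟨hc0, hp0⟩, ⟨hc1, hp1⟩, F1r, F1s, F2, F3⟩ := hm
  -- proper maps, hence closed ranges
  have pm0 : IsProperMap m0 := isProperMap_iff_isCompact_preimage.mpr
    ⟨hc0, fun K hK => hp0 K hK⟩
  have pm1 : IsProperMap m1 := isProperMap_iff_isCompact_preimage.mpr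
    ⟨hc1, fun K hK => hp1 K hK⟩
  have closed0 : IsClosed (Set.range m0) := pm0.isClosedMap.isClosed_range
  have closed1 : IsClosed (Set.range m1) := pm1.isClosedMap.isClosed_range
  have s_maps : Set.MapsTo gE.s (Set.range m1) (Set.range m0) := by
    rintro e ⟨a, rfl⟩
    exact ⟨gG.s a, (F1s a).symm⟩
  have r_maps : Set.MapsTo gE.r (Set.range m1) (Set.range m0) := by
    rintro e ⟨a, rfl⟩
    exact ⟨gG.r a, (F1r a).symm⟩
  have r_pre : gE.r ⁻¹' (Set.range m0) ⊆ Set.range m1 := by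
    intro x hx
    obtain ⟨v, hv⟩ := hx
    obtain ⟨e, ⟨he1, _⟩, _⟩ := F2 x v hv.symm
    exact ⟨e, he1⟩
  have hG1eq : Set.range m1 = gE.r ⁻¹' (Set.range m0) :=
    subset_antisymm (fun x hx => r_maps hx) r_pre
  refine ⟨⟨s_maps, r_maps, closed0, closed1, ?_, ?_, ?_⟩, ?_, r_pre⟩
  · exact (hE.s_cont.comp continuous_subtype_val).subtype_mk _
  · exact (hE.r_cont.comp continuous_subtype_val).subtype_mk _
  · -- restricted range map is a local homeomorphism
    rw [isLocalHomeomorph_iff_isOpenEmbedding_restrict]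
    rintro ⟨x, hx⟩
    obtain ⟨U, hU, hUe⟩ := isLocalHomeomorph_iff_isOpenEmbedding_restrict.mp hE.r_locHomeo x
    refine ⟨Subtype.val ⁻¹' U, continuous_subtype_val.continuousAt.preimage_mem_nhds hU, ?_⟩
    set f : Set.range m1 → Set.range m0 :=
      (gE.restrict (Set.range m0) (Set.range m1) s_maps r_maps).r with hf
    have hfc : Continuous f := (hE.r_cont.comp continuous_subtype_val).subtype_mk _
    set U' : Set (Set.range m1) := Subtype.val ⁻¹' U with hU'
    -- the auxiliary inclusion U' → U
    set j : U' → U := fun u => ⟨u.1.1, u.2⟩ with hj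
    have hjc : Continuous j :=
      (continuous_subtype_val.comp continuous_subtype_val).subtype_mk _
    have hjemb : IsEmbedding j := by
      refine IsEmbedding.of_comp hjc continuous_subtype_val ?_
      show IsEmbedding ((Subtype.val : U → EE) ∘ j)
      exact (IsEmbedding.subtypeVal.comp IsEmbedding.subtypeVal :
        IsEmbedding fun u : U' => u.1.1)
    have hcomp : Subtype.val ∘ (U'.restrict f) = (U.restrict gE.r) ∘ j := rfl
    have hemb : IsEmbedding (U'.restrict f) := by
      refine IsEmbedding.of_comp (hfc.comp continuous_subtype_val)
        continuous_subtype_val ?_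
      rw [hcomp]
      exact hUe.isEmbedding.comp hjemb
    refine ⟨hemb, ?_⟩
    have hrange : Set.range (U'.restrict f) =
        (Subtype.val : Set.range m0 → VE) ⁻¹' (gE.r '' U) := by
      ext v
      constructor
      · rintro ⟨u, rfl⟩
        exact ⟨u.1.1, u.2, rfl⟩
      · rintro ⟨y, hyU, hyv⟩
        have hy1 : y ∈ Set.range m1 := by
          rw [hG1eq]
          exact Set.mem_preimage.2 (hyv ▸ v.2)
        exact ⟨⟨⟨y, hy1⟩, hyU⟩, Subtype.ext hyv⟩
    show IsOpen (Set.range (U'.restrict f))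
    rw [hrange]
    have : IsOpen (gE.r '' U) := by
      have := hUe.isOpen_range
      rwa [Set.range_domRestrict] at this
    exact this.preimage continuous_subtype_val
  · -- negative invariance
    rintro v ⟨⟨w, rfl⟩, hreg⟩
    have hwreg : w ∈ gG.regSet := by
      by_contra h
      exact (F3 ⟨w, h, rfl⟩) hreg
    obtain ⟨e, he⟩ := regSet_subset_range_s gG hG.s_cont hwreg
    exact ⟨m1 e, by rw [F1s, he], ⟨gG.r e, (F1r e).symm⟩⟩
end

section
/- Let m : G → E be a regular factor map between row-finite topological graphs. Then m⁰(G⁰_reg) ⊆ E⁰_reg. -/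
open Set Topology

/-- Let `m : G → E` be a regular factor map between row-finite topological graphs.
Then `m⁰(G⁰_reg) ⊆ E⁰_reg`. -/
theorem regularFactorMap_image_regSet_subset
    {VG EG VE EE : Type*} [TopologicalSpace VG] [TopologicalSpace EG]
    [TopologicalSpace VE] [TopologicalSpace EE]
    [LocallyCompactSpace VG] [T2Space VG] [LocallyCompactSpace EG] [T2Space EG]
    [LocallyCompactSpace VE] [T2Space VE] [LocallyCompactSpace EE] [T2Space EE]
    (gG : GraphData VG EG) (gE : GraphData VE EE)
    (hG : IsTopGraph gG) (hE : IsTopGraph gE)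
    (hrowG : gG.RowFinite) (hrowE : gE.RowFinite)
    (m0 : VG → VE) (m1 : EG → EE) (hm : IsRegularFactorMap gG gE m0 m1) :
    m0 '' gG.regSet ⊆ gE.regSet := by
  rintro _ ⟨v, hv, rfl⟩
  rw [← hrowE]
  rw [← hrowG] at hv
  obtain ⟨e, rfl⟩ := hv
  exact ⟨m1 e, hm.F1s e⟩
end

section
/- Let F be a topological graph in which s_F(F¹) is a preopen subset of F⁰, i.e., s_F(F¹) is contained in the interior of its closure. Then (closure(F⁰_sink) \ F⁰_sink) ∩ F⁰_fin = ∅. -/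
open Set Topology

/-- Let `F` be a topological graph in which `s_F(F¹)` is a preopen subset of `F⁰` (i.e. it
is contained in the interior of its closure). Then
`(closure(F⁰_sink) \ F⁰_sink) ∩ F⁰_fin = ∅`. -/
theorem preopen_source_image_boundary_empty
    {V E : Type*} [TopologicalSpace V] [TopologicalSpace E]
    [LocallyCompactSpace V] [T2Space V] [LocallyCompactSpace E] [T2Space E]
    (gF : GraphData V E) (hF : IsTopGraph gF)
    (hpreopen : Set.range gF.s ⊆ interior (closure (Set.range gF.s))) :
    (closure gF.sinkSet \ gF.sinkSet) ∩ gF.finSet = ∅ := by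
  rw [Set.eq_empty_iff_forall_notMem]
  rintro v ⟨⟨hcl, hns⟩, hfin⟩
  -- v ∉ sinkSet means v ∈ closure (range s)
  have hvcl : v ∈ closure (Set.range gF.s) := by
    simpa [GraphData.sinkSet] using hns
  -- Katsura: v ∈ finSet ∩ closure(range s) ⇒ v ∈ range s
  obtain ⟨U, hU, hK⟩ := hfin
  obtain ⟨W, hWU, hWopen, hvW⟩ := mem_nhds_iff.mp hU
  have hK' : IsCompact (gF.s '' (gF.s ⁻¹' U)) := hK.image hF.s_cont
  have hKcl : IsClosed (gF.s '' (gF.s ⁻¹' U)) := hK'.isClosed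
  have hvK : v ∈ gF.s '' (gF.s ⁻¹' U) := by
    rw [← hKcl.closure_eq]
    rw [mem_closure_iff] at hvcl ⊢
    intro O hO hvO
    obtain ⟨y, hyO, e, he⟩ := hvcl (O ∩ W) (hO.inter hWopen) ⟨hvO, hvW⟩
    exact ⟨y, hyO.1, e, hWU (he ▸ hyO.2), he⟩
  have hvr : v ∈ Set.range gF.s := by
    obtain ⟨e, _, he⟩ := hvK
    exact ⟨e, he⟩
  -- so v ∈ interior (closure (range s)), an open set; since v ∈ closure sinkSet,
  -- this open set meets sinkSet, contradiction
  have hvint := hpreopen hvr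
  rw [mem_closure_iff] at hcl
  obtain ⟨w, hw1, hw2⟩ := hcl _ isOpen_interior hvint
  exact hw2 (interior_subset hw1)
end
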